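/- (Bound for the bottom of the Hofstadter butterfly.) Let V₀ > 0 and let M, N be coprime positive integers. Let H be the bounded self-adjoint Harper operator on ℓ²(ℤ; ℂ) given by (Hφ)(q) = −φ(q+1) − φ(q−1) − V₀ cos(2πqM/N)·φ(q). Then for every N-periodic positive test vector, i.e. every ψ : ℤ/Nℤ → ℝ with ψ(q) > 0 for all q, and for all real numbers a, b such that a·ψ(q) ≤ −ψ(q+1) − ψ(q−1) − V₀ cos(2πqM/N)·ψ(q) ≤ b·ψ(q) for every q ∈ ℤ/Nℤ, one has a ≤ inf σ(H) ≤ b, where inf σ(H) is the infimum of the (real) spectrum of H. -/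

import Mathlib

open Real

set_option maxHeartbeats 1000000
set_option synthInstance.maxHeartbeats 400000

noncomputable section

local notation "E2" => lp (fun _ : ℤ => ℂ) 2
local notation "⟪" x ", " y "⟫" => @inner ℂ _ _ x y

private lemma re_point (α : ℝ) (u v p : ℂ) :
    (⟪(-u - v - (α:ℂ)*p : ℂ), p⟫).re
      = -((starRingEnd ℂ) u * p).re - ((starRingEnd ℂ) v * p).re - α * ‖p‖^2 := by
  simp only [RCLike.inner_apply, map_sub, map_mul, Complex.conj_ofReal, sub_mul,
    Complex.sub_re, mul_assoc, Complex.conj_mul', map_neg, neg_mul, Complex.neg_re]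
  simp [Complex.mul_re, Complex.sq_norm, Complex.normSq_apply]
  ring

private lemma re_symm (u v : ℂ) : ((starRingEnd ℂ) u * v).re = ((starRingEnd ℂ) v * u).re := by
  rw [← Complex.conj_re ((starRingEnd ℂ) u * v)]; simp [mul_comm]

private lemma re_abs_le (u v : ℂ) : |((starRingEnd ℂ) u * v).re| ≤ ‖u‖ * ‖v‖ := by
  calc |((starRingEnd ℂ) u * v).re| ≤ ‖(starRingEnd ℂ) u * v‖ := Complex.abs_re_le_norm _
  _ = ‖u‖ * ‖v‖ := by rw [norm_mul]; simp

private lemma hasSum_norm_sq (x : E2) : HasSum (fun q : ℤ => ‖x q‖^2) (‖x‖^2) := by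
  have h := (lp.hasSum_inner (𝕜 := ℂ) x x).mapL Complex.reCLM
  have e2 : Complex.reCLM ⟪x, x⟫ = ‖x‖^2 := by
    simpa using (inner_self_eq_norm_sq (𝕜 := ℂ) x)
  rw [e2] at h
  exact h.congr_fun (fun q => by simpa using (inner_self_eq_norm_sq (𝕜 := ℂ) (x q)).symm)

private lemma lower_aux (c : ℤ → ℝ) (Cc : ℝ) (hCc : ∀ q, |c q| ≤ Cc)
    (H : E2 →L[ℂ] E2)
    (hH : ∀ (f : E2) (q : ℤ), (H f) q = -f (q + 1) - f (q - 1) - ((c q : ℝ) : ℂ) * f q)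
    (w : ℤ → ℝ) (hw : ∀ q, 0 < w q) (Cw : ℝ)
    (hCw : ∀ q, w q ≤ Cw) (hCw' : ∀ q, (w q)⁻¹ ≤ Cw)
    (a : ℝ) (ha : ∀ q, a ≤ -w q - (w (q-1))⁻¹ - c q)
    (x : E2) : a * ‖x‖^2 ≤ (⟪H x, x⟫).re := by
  set n : ℤ → ℝ := fun q => ‖x q‖^2 with hn_def
  have hnsum : HasSum n (‖x‖^2) := hasSum_norm_sq x
  have hn : Summable n := hnsum.summable
  have hn0 : ∀ q, 0 ≤ n q := fun q => sq_nonneg _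
  have hnshift : Summable (fun q => n (q+1)) := ((Equiv.addRight (1:ℤ)).summable_iff).mpr hn
  set t : ℤ → ℝ := fun q => ((starRingEnd ℂ) (x (q+1)) * (x q)).re with ht_def
  have htb : ∀ q, |t q| ≤ ‖x (q+1)‖ * ‖x q‖ := fun q => re_abs_le _ _
  have ht : Summable t := by
    refine Summable.of_norm_bounded (g := fun q => (n (q+1) + n q)/2) ((hnshift.add hn).div_const 2)
      (fun q => ?_)
    rw [Real.norm_eq_abs]
    refine (htb q).trans ?_
    have := sq_nonneg (‖x (q+1)‖ - ‖x q‖)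
    simp only [hn_def]; nlinarith
  have htshift : Summable (fun q => t (q - 1)) := ((Equiv.subRight (1:ℤ)).summable_iff).mpr ht
  have bounded_sum : ∀ (u : ℤ → ℝ) (Cu : ℝ), (∀ q, |u q| ≤ Cu) → Summable (fun q => u q * n q) := by
    intro u Cu hu
    refine Summable.of_norm_bounded (g := fun q => Cu * n q) (hn.mul_left Cu) (fun q => ?_)
    rw [Real.norm_eq_abs, abs_mul, abs_of_nonneg (hn0 q)]
    exact mul_le_mul_of_nonneg_right (hu q) (hn0 q)
  have hcn : Summable (fun q => c q * n q) := bounded_sum c Cc hCc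
  have hwn : Summable (fun q => w q * n q) :=
    bounded_sum w Cw (fun q => by rw [abs_of_pos (hw q)]; exact hCw q)
  have hw'n : Summable (fun q => (w (q-1))⁻¹ * n q) :=
    bounded_sum _ Cw (fun q => by rw [abs_of_pos (inv_pos.mpr (hw _))]; exact hCw' _)
  have hwn' : Summable (fun q => (w q)⁻¹ * n (q+1)) := by
    refine Summable.of_norm_bounded (g := fun q => Cw * n (q+1)) (hnshift.mul_left Cw) (fun q => ?_)
    rw [Real.norm_eq_abs, abs_mul, abs_of_nonneg (hn0 _), abs_of_pos (inv_pos.mpr (hw _))]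
    exact mul_le_mul_of_nonneg_right (hCw' _) (hn0 _)
  -- Step 1 : the real part of the inner product as a tsum
  have hre : (⟪H x, x⟫).re = ∑' q, (-t q - t (q-1) - c q * n q) := by
    have h1 : (⟪H x, x⟫).re = ∑' q, (⟪(H x) q, x q⟫).re := by
      rw [lp.inner_eq_tsum]
      calc (∑' i : ℤ, ⟪(H x) i, x i⟫).re
          = Complex.reCLM (∑' i : ℤ, ⟪(H x) i, x i⟫) := rfl
        _ = ∑' i : ℤ, Complex.reCLM ⟪(H x) i, x i⟫ :=
            Complex.reCLM.map_tsum (lp.summable_inner (H x) x)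
        _ = ∑' q : ℤ, (⟪(H x) q, x q⟫).re := rfl
    rw [h1]
    refine tsum_congr fun q => ?_
    have e1 : ((starRingEnd ℂ) (x (q-1)) * (x q)).re = t (q-1) := by
      simp only [ht_def, sub_add_cancel]
      exact re_symm _ _
    rw [hH x q, re_point, e1]
  have hts : ∑' q, t (q-1) = ∑' q, t q := (Equiv.subRight (1:ℤ)).tsum_eq t
  have hsplit : ∑' q, (-t q - t (q-1) - c q * n q)
      = -(∑' q, t q) - (∑' q, t (q-1)) - ∑' q, (c q * n q) := by
    rw [Summable.tsum_sub (ht.neg.sub htshift) hcn, Summable.tsum_sub ht.neg htshift, tsum_neg]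
  set g : ℤ → ℝ := fun q => w q * n q + (w q)⁻¹ * n (q+1) - 2 * t q with hg_def
  have hg0 : ∀ q, 0 ≤ g q := by
    intro q
    have h1 : t q ≤ ‖x (q+1)‖ * ‖x q‖ := (abs_le.mp (htb q)).2
    have hwq := hw q
    have hinv : w q * (w q)⁻¹ = 1 := mul_inv_cancel₀ (ne_of_gt hwq)
    have hinvpos : 0 < (w q)⁻¹ := inv_pos.mpr hwq
    simp only [hg_def, hn_def]
    nlinarith [sq_nonneg (w q * ‖x q‖ - ‖x (q+1)‖), norm_nonneg (x q),
      norm_nonneg (x (q+1)), h1, hinv, hwq, hinvpos]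
  have hcoeffsum : Summable (fun q => (-c q - w q - (w (q-1))⁻¹) * n q) := by
    have e : (fun q => (-c q - w q - (w (q-1))⁻¹) * n q)
        = fun q => (-(c q * n q) - w q * n q) - (w (q-1))⁻¹ * n q := by funext q; ring
    rw [e]; exact (hcn.neg.sub hwn).sub hw'n
  have hcoeff_eq : ∑' q, ((-c q - w q - (w (q-1))⁻¹) * n q)
      = -(∑' q, (c q * n q)) - (∑' q, w q * n q) - ∑' q, ((w (q-1))⁻¹ * n q) := by
    calc ∑' q, ((-c q - w q - (w (q-1))⁻¹) * n q)
        = ∑' q, ((-(c q * n q) - w q * n q) - (w (q-1))⁻¹ * n q) :=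
          tsum_congr fun q => by ring
      _ = _ := by rw [Summable.tsum_sub (hcn.neg.sub hwn) hw'n, Summable.tsum_sub hcn.neg hwn, tsum_neg]
  have hgsum_eq : ∑' q, g q
      = (∑' q, (w q * n q)) + (∑' q, ((w (q-1))⁻¹ * n q)) - 2 * ∑' q, t q := by
    have hshift_eq : ∑' q, ((w (q-1))⁻¹ * n q) = ∑' q, ((w q)⁻¹ * n (q+1)) := by
      have h := (Equiv.subRight (1:ℤ)).tsum_eq (fun q => (w q)⁻¹ * n (q+1))
      simp only [Equiv.subRight_apply, sub_add_cancel] at h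
      exact h
    calc ∑' q, g q
        = (∑' q, (w q * n q + (w q)⁻¹ * n (q+1))) - ∑' q, (2 * t q) :=
          Summable.tsum_sub (hwn.add hwn') (ht.mul_left 2)
      _ = ((∑' q, (w q * n q)) + ∑' q, ((w q)⁻¹ * n (q+1))) - 2 * ∑' q, t q := by
          rw [Summable.tsum_add hwn hwn', tsum_mul_left]
      _ = _ := by rw [hshift_eq]
  have hkey : ∑' q, (a * n q) ≤ ∑' q, ((-c q - w q - (w (q-1))⁻¹) * n q) := by
    refine Summable.tsum_le_tsum (fun q => ?_) (hn.mul_left a) hcoeffsum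
    refine mul_le_mul_of_nonneg_right ?_ (hn0 q)
    have := ha q; linarith
  have hgnonneg : (0:ℝ) ≤ ∑' q, g q := tsum_nonneg hg0
  have han : ∑' q, (a * n q) = a * ‖x‖^2 := by rw [tsum_mul_left, hnsum.tsum_eq]
  linarith [hre, hsplit, hts, hgsum_eq, hcoeff_eq, hkey, hgnonneg, han]

private lemma re_point_real (α u v s : ℝ) :
    (⟪((-(u:ℂ)) - (v:ℂ) - (α:ℂ)*(s:ℂ) : ℂ), ((s:ℝ):ℂ)⟫).re = (-u - v - α*s)*s := by
  have e : ((-(u:ℂ)) - (v:ℂ) - (α:ℂ)*(s:ℂ)) = (((-u - v - α*s : ℝ)):ℂ) := by push_cast; ring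
  rw [e, RCLike.inner_apply, Complex.conj_ofReal, ← Complex.ofReal_mul, Complex.ofReal_re]
  ring

private lemma hasSum_norm_sq' (x : E2) : HasSum (fun q : ℤ => ‖x q‖^2) (‖x‖^2) := by
  have h := (lp.hasSum_inner (𝕜 := ℂ) x x).mapL Complex.reCLM
  have e2 : Complex.reCLM ⟪x, x⟫ = ‖x‖^2 := by
    simpa using (inner_self_eq_norm_sq (𝕜 := ℂ) x)
  rw [e2] at h
  exact h.congr_fun (fun q => by simpa using (inner_self_eq_norm_sq (𝕜 := ℂ) (x q)).symm)

private lemma upper_aux (c : ℤ → ℝ)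
    (H : E2 →L[ℂ] E2)
    (hH : ∀ (f : E2) (q : ℤ), (H f) q = -f (q + 1) - f (q - 1) - ((c q : ℝ) : ℂ) * f q)
    (Ψ : ℤ → ℝ) (hΨ : ∀ q, 0 < Ψ q)
    (b : ℝ) (hb : ∀ q, -Ψ (q+1) - Ψ (q-1) - c q * Ψ q ≤ b * Ψ q)
    (K : ℤ) (hK : 1 ≤ K) (hper0 : Ψ K = Ψ 0) (hper1 : Ψ (K-1) = Ψ (-1)) :
    ∃ x : E2, (⟪H x, x⟫).re ≤ b * ‖x‖^2 + 2 * (Ψ 0 * Ψ (-1))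
      ∧ ‖x‖^2 = ∑ q ∈ Finset.Ico (0:ℤ) K, Ψ q ^ 2 := by
  set r : ℤ → ℝ := fun q => if q ∈ Finset.Ico (0:ℤ) K then Ψ q else 0 with hr_def
  have hr_zero : ∀ q ∉ Finset.Ico (0:ℤ) K, r q = 0 := by
    intro q hq; simp only [hr_def, if_neg hq]
  have hfin : Set.Finite {q : ℤ | (fun q => ((r q : ℝ) : ℂ)) q ≠ 0} := by
    apply Set.Finite.subset (Finset.Ico (0:ℤ) K).finite_toSet
    intro q hq
    simp only [Set.mem_setOf_eq] at hq
    by_contra h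
    exact hq (by rw [hr_zero q (by simpa using h)]; simp)
  have hf2 : Memℓp (fun q : ℤ => ((r q : ℝ) : ℂ)) 2 :=
    (memℓp_zero hfin).of_exponent_ge (by norm_num)
  set x : E2 := ⟨_, hf2⟩ with hx_def
  have hxval : ∀ q : ℤ, x q = ((r q : ℝ) : ℂ) := fun q => rfl
  -- norm computation
  have hnormsq : ∀ q : ℤ, ‖x q‖^2 = r q ^ 2 := by
    intro q; rw [hxval q, Complex.norm_real, Real.norm_eq_abs, sq_abs]
  have hnorm : ‖x‖^2 = ∑ q ∈ Finset.Ico (0:ℤ) K, Ψ q ^ 2 := by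
    rw [← (hasSum_norm_sq' x).tsum_eq]
    rw [tsum_congr hnormsq]
    rw [tsum_eq_sum (s := Finset.Ico (0:ℤ) K) (fun q hq => by rw [hr_zero q hq]; ring)]
    refine Finset.sum_congr rfl fun q hq => by rw [hr_def]; simp [hq]
  -- inner product computation
  have hre : (⟪H x, x⟫).re = ∑' q, ((-r (q+1) - r (q-1) - c q * r q) * r q) := by
    have h1 : (⟪H x, x⟫).re = ∑' q, (⟪(H x) q, x q⟫).re := by
      rw [lp.inner_eq_tsum]
      calc (∑' i : ℤ, ⟪(H x) i, x i⟫).re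
          = Complex.reCLM (∑' i : ℤ, ⟪(H x) i, x i⟫) := rfl
        _ = ∑' i : ℤ, Complex.reCLM ⟪(H x) i, x i⟫ :=
            Complex.reCLM.map_tsum (lp.summable_inner (H x) x)
        _ = ∑' q : ℤ, (⟪(H x) q, x q⟫).re := rfl
    rw [h1]
    refine tsum_congr fun q => ?_
    rw [hH x q, hxval (q+1), hxval (q-1), hxval q]
    exact re_point_real (c q) (r (q+1)) (r (q-1)) (r q)
  have hG : (⟪H x, x⟫).re = ∑ q ∈ Finset.Ico (0:ℤ) K, ((-r (q+1) - r (q-1) - c q * r q) * r q) := by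
    rw [hre]
    exact tsum_eq_sum (fun q hq => by rw [hr_zero q hq]; ring)
  -- termwise bound
  have hbound : ∀ q ∈ Finset.Ico (0:ℤ) K,
      (-r (q+1) - r (q-1) - c q * r q) * r q
        ≤ b * Ψ q ^ 2 + ((if q = 0 then Ψ 0 * Ψ (-1) else 0)
            + (if q = K-1 then Ψ 0 * Ψ (-1) else 0)) := by
    intro q hq
    rw [Finset.mem_Ico] at hq
    have hrq : r q = Ψ q := by rw [hr_def]; simp [Finset.mem_Ico, hq.1, hq.2]
    have hr1 : r (q+1) = Ψ (q+1) - (if q = K-1 then Ψ (q+1) else 0) := by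
      by_cases h : q = K-1
      · subst h
        have : (K - 1 + 1 : ℤ) = K := by ring
        rw [this, if_pos rfl, hr_def]
        simp
      · have h1 : q + 1 < K := by omega
        have h0 : (0:ℤ) ≤ q + 1 := by omega
        rw [if_neg h, hr_def]
        simp [Finset.mem_Ico, h0, h1]
    have hr2 : r (q-1) = Ψ (q-1) - (if q = 0 then Ψ (q-1) else 0) := by
      by_cases h : q = 0
      · subst h
        rw [if_pos rfl, hr_def]
        norm_num
      · have h1 : q - 1 < K := by omega
        have h0 : (0:ℤ) ≤ q - 1 := by omega
        rw [if_neg h, hr_def]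
        simp [Finset.mem_Ico, h0, h1]
        intro h'; omega
    have hmain : (-Ψ (q+1) - Ψ (q-1) - c q * Ψ q) * Ψ q ≤ (b * Ψ q) * Ψ q :=
      mul_le_mul_of_nonneg_right (hb q) (le_of_lt (hΨ q))
    have e1 : (if q = K-1 then Ψ (q+1) else 0) * Ψ q = (if q = K-1 then Ψ 0 * Ψ (-1) else 0) := by
      by_cases h : q = K-1
      · subst h
        rw [if_pos rfl, if_pos rfl, show (K - 1 + 1 : ℤ) = K by ring, hper0, hper1]
      · rw [if_neg h, if_neg h, zero_mul]
    have e2 : (if q = 0 then Ψ (q-1) else 0) * Ψ q = (if q = 0 then Ψ 0 * Ψ (-1) else 0) := by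
      by_cases h : q = 0
      · subst h
        rw [if_pos rfl, if_pos rfl]
        norm_num
        ring
      · rw [if_neg h, if_neg h, zero_mul]
    calc (-r (q+1) - r (q-1) - c q * r q) * r q
        = (-Ψ (q+1) - Ψ (q-1) - c q * Ψ q) * Ψ q
            + (if q = K-1 then Ψ (q+1) else 0) * Ψ q
            + (if q = 0 then Ψ (q-1) else 0) * Ψ q := by
          rw [hrq, hr1, hr2]; ring
      _ ≤ (b * Ψ q) * Ψ q
            + (if q = K-1 then Ψ (q+1) else 0) * Ψ q
            + (if q = 0 then Ψ (q-1) else 0) * Ψ q := by linarith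
      _ = b * Ψ q ^ 2 + ((if q = 0 then Ψ 0 * Ψ (-1) else 0)
            + (if q = K-1 then Ψ 0 * Ψ (-1) else 0)) := by rw [e1, e2]; ring
  refine ⟨x, ?_, hnorm⟩
  calc (⟪H x, x⟫).re
      = ∑ q ∈ Finset.Ico (0:ℤ) K, ((-r (q+1) - r (q-1) - c q * r q) * r q) := hG
    _ ≤ ∑ q ∈ Finset.Ico (0:ℤ) K, (b * Ψ q ^ 2 + ((if q = 0 then Ψ 0 * Ψ (-1) else 0)
            + (if q = K-1 then Ψ 0 * Ψ (-1) else 0))) := Finset.sum_le_sum hbound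
    _ = b * ‖x‖^2 + 2 * (Ψ 0 * Ψ (-1)) := by
        rw [Finset.sum_add_distrib, Finset.sum_add_distrib, ← Finset.mul_sum, ← hnorm]
        have m0 : (0:ℤ) ∈ Finset.Ico (0:ℤ) K := by simp [Finset.mem_Ico]; omega
        have m1 : (K-1:ℤ) ∈ Finset.Ico (0:ℤ) K := by simp [Finset.mem_Ico]; omega
        rw [Finset.sum_ite_eq' (Finset.Ico (0:ℤ) K) 0 (fun _ => Ψ 0 * Ψ (-1)), if_pos m0,
          Finset.sum_ite_eq' (Finset.Ico (0:ℤ) K) (K-1) (fun _ => Ψ 0 * Ψ (-1)), if_pos m1]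
        ring

private lemma cos_per (M N : ℕ) [NeZero N] (q : ℤ) :
    Real.cos (2 * π * (q:ℝ) * (M:ℝ) / (N:ℝ)) =
    Real.cos (2 * π * ((((q : ZMod N)).val : ℝ)) * (M:ℝ) / (N:ℝ)) := by
  have hdvd : (N:ℤ) ∣ (q - (((q : ZMod N)).val : ℤ)) := by
    rw [← ZMod.intCast_zmod_eq_zero_iff_dvd]
    push_cast
    simp [ZMod.natCast_val, ZMod.cast_id]
  obtain ⟨k, hk⟩ := hdvd
  have hq : (q:ℝ) = (((q : ZMod N)).val : ℝ) + (N:ℝ) * (k:ℝ) := by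
    have h2 : (q:ℤ) = (((q : ZMod N)).val : ℤ) + N * k := by linarith [hk]
    exact_mod_cast congrArg (fun z : ℤ => (z : ℝ)) h2
  have hN : (N:ℝ) ≠ 0 := Nat.cast_ne_zero.mpr (NeZero.ne N)
  rw [hq, show 2*π*((((q : ZMod N)).val : ℝ) + (N:ℝ)*(k:ℝ))*(M:ℝ)/(N:ℝ)
      = 2*π*(((q : ZMod N)).val : ℝ)*(M:ℝ)/(N:ℝ) + ((k*M : ℤ):ℝ)*(2*π) by
    push_cast; field_simp]
  exact Real.cos_add_int_mul_two_pi _ (k*M)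

private lemma spec_nonneg_aux {E : Type*} [NormedAddCommGroup E] [InnerProductSpace ℂ E]
    [CompleteSpace E] (T : E →L[ℂ] E) (hT : IsSelfAdjoint T) :
    0 ≤ T ↔ ∀ x ∈ spectrum ℝ T, 0 ≤ x :=
  StarOrderedRing.nonneg_iff_spectrum_nonneg (R := ℝ) _ hT

/-- **bound for the bottom of the Hofstadter butterfly.** Let `H` be the
Harper operator `(Hφ)(q) = −φ(q+1) − φ(q−1) − V₀ cos(2πqM/N) φ(q)` on `ℓ²(ℤ; ℂ)` with
`V₀ > 0` and `M, N` coprime positive integers.  For every `N`-periodic strictly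
positive test vector `ψ : ℤ/Nℤ → ℝ` and all `a b : ℝ` with
`a·ψ(q) ≤ −ψ(q+1) − ψ(q−1) − V₀ cos(2πqM/N) ψ(q) ≤ b·ψ(q)` for all `q`, one has
`a ≤ inf σ(H) ≤ b`. -/
theorem harper_bottom_bounds (V₀ : ℝ) (hV₀ : 0 < V₀)
    (M N : ℕ) [NeZero N] (hM : 0 < M) (hN : 0 < N) (hMN : Nat.Coprime M N)
    (H : lp (fun _ : ℤ => ℂ) 2 →L[ℂ] lp (fun _ : ℤ => ℂ) 2)
    (hH : ∀ (f : lp (fun _ : ℤ => ℂ) 2) (q : ℤ),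
      (H f) q = -f (q + 1) - f (q - 1)
        - ((V₀ * Real.cos (2 * π * (q : ℝ) * (M : ℝ) / (N : ℝ)) : ℝ) : ℂ) * f q)
    (hsa : IsSelfAdjoint H)
    (ψ : ZMod N → ℝ) (hψpos : ∀ q, 0 < ψ q)
    (a b : ℝ)
    (hab : ∀ q : ZMod N,
      a * ψ q ≤ -ψ (q + 1) - ψ (q - 1)
          - V₀ * Real.cos (2 * π * (q.val : ℝ) * (M : ℝ) / (N : ℝ)) * ψ q ∧
      -ψ (q + 1) - ψ (q - 1)
          - V₀ * Real.cos (2 * π * (q.val : ℝ) * (M : ℝ) / (N : ℝ)) * ψ q ≤ b * ψ q) :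
    a ≤ sInf {r : ℝ | (r : ℂ) ∈ spectrum ℂ H} ∧
    sInf {r : ℝ | (r : ℂ) ∈ spectrum ℂ H} ≤ b := by
  classical
  haveI : Nonempty (ZMod N) := ⟨0⟩
  haveI : Nontrivial E2 := by
    refine ⟨lp.single 2 0 1, 0, fun h => ?_⟩
    have := congrFun (congrArg (fun x : E2 => (x : ℤ → ℂ)) h) 0
    simp [lp.single_apply] at this
  set S := {r : ℝ | (r : ℂ) ∈ spectrum ℂ H} with hS_def
  set c : ℤ → ℝ := fun q => V₀ * Real.cos (2 * π * (q:ℝ) * (M:ℝ) / (N:ℝ)) with hc_def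
  set Ψ : ℤ → ℝ := fun q => ψ ((q : ZMod N)) with hΨ_def
  have hΨpos : ∀ q : ℤ, 0 < Ψ q := fun q => hψpos _
  have hcΨ : ∀ q : ℤ, c q = V₀ * Real.cos (2 * π * ((((q : ZMod N)).val : ℕ) : ℝ) * (M:ℝ) / (N:ℝ)) := by
    intro q
    simp only [hc_def]
    rw [cos_per M N q]
  have hΨsucc : ∀ q : ℤ, Ψ (q+1) = ψ ((q : ZMod N) + 1) := by
    intro q
    simp only [hΨ_def]
    congr 1
    push_cast
    ring
  have hΨpred : ∀ q : ℤ, Ψ (q-1) = ψ ((q : ZMod N) - 1) := by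
    intro q
    simp only [hΨ_def]
    congr 1
    push_cast
    ring
  have haΨ : ∀ q : ℤ, a * Ψ q ≤ -Ψ (q+1) - Ψ (q-1) - c q * Ψ q := by
    intro q
    rw [hΨsucc q, hΨpred q, hcΨ q]
    exact (hab (q : ZMod N)).1
  have hbΨ : ∀ q : ℤ, -Ψ (q+1) - Ψ (q-1) - c q * Ψ q ≤ b * Ψ q := by
    intro q
    rw [hΨsucc q, hΨpred q, hcΨ q]
    exact (hab (q : ZMod N)).2
  have hH' : ∀ (f : E2) (q : ℤ), (H f) q = -f (q+1) - f (q-1) - ((c q : ℝ) : ℂ) * f q := hH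
  -- extrema of ψ
  set mx := Finset.univ.sup' Finset.univ_nonempty ψ with hmx_def
  set mn := Finset.univ.inf' Finset.univ_nonempty ψ with hmn_def
  have hmx : ∀ j, ψ j ≤ mx := fun j => Finset.le_sup' ψ (Finset.mem_univ j)
  have hmn : ∀ j, mn ≤ ψ j := fun j => Finset.inf'_le ψ (Finset.mem_univ j)
  have hmnpos : 0 < mn := Finset.lt_inf'_iff _ |>.mpr (fun j _ => hψpos j)
  have hmxpos : 0 < mx := lt_of_lt_of_le (hψpos (0 : ZMod N)) (hmx 0)
  have hΨmx : ∀ q : ℤ, Ψ q ≤ mx := fun q => hmx _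
  have hΨmn : ∀ q : ℤ, mn ≤ Ψ q := fun q => hmn _
  set w : ℤ → ℝ := fun q => Ψ (q+1) / Ψ q with hw_def
  have hwpos : ∀ q, 0 < w q := fun q => div_pos (hΨpos _) (hΨpos _)
  set Cw := mx / mn with hCw_def
  have hCw : ∀ q, w q ≤ Cw := fun q => div_le_div₀ hmxpos.le (hΨmx _) hmnpos (hΨmn _)
  have hCw' : ∀ q, (w q)⁻¹ ≤ Cw := by
    intro q
    have e : (w q)⁻¹ = Ψ q / Ψ (q+1) := by
      simp only [hw_def]
      rw [inv_div]
    rw [e]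
    exact div_le_div₀ hmxpos.le (hΨmx _) hmnpos (hΨmn _)
  have ha_low : ∀ q : ℤ, a ≤ -w q - (w (q-1))⁻¹ - c q := by
    intro q
    have hw1 : w (q-1) = Ψ q / Ψ (q-1) := by simp only [hw_def, sub_add_cancel]
    rw [hw1, inv_div]
    have hq := hΨpos q
    have e : -w q - Ψ (q-1) / Ψ q - c q = (-Ψ (q+1) - Ψ (q-1) - c q * Ψ q) / Ψ q := by
      simp only [hw_def]
      field_simp
    rw [e, le_div_iff₀ hq]
    exact haΨ q
  have hCc : ∀ q, |c q| ≤ V₀ := by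
    intro q
    simp only [hc_def]
    rw [abs_mul, abs_of_pos hV₀]
    exact mul_le_of_le_one_right hV₀.le (Real.abs_cos_le_one _)
  have hlow : ∀ x : E2, a * ‖x‖^2 ≤ (⟪H x, x⟫).re :=
    lower_aux c V₀ hCc H hH' w hwpos Cw hCw hCw' a ha_low
  have expand : ∀ (β : ℝ) (x : E2),
      (⟪(H - algebraMap ℝ (E2 →L[ℂ] E2) β) x, x⟫).re = (⟪H x, x⟫).re - β * ‖x‖^2 := by
    intro β x
    have e' : (algebraMap ℝ (E2 →L[ℂ] E2) β) x = (β:ℂ) • x := by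
      rw [Algebra.algebraMap_eq_smul_one, ContinuousLinearMap.smul_apply,
        ContinuousLinearMap.one_apply, ← algebraMap_smul ℂ β x, Complex.coe_algebraMap]
    have e : (H - algebraMap ℝ (E2 →L[ℂ] E2) β) x = H x - (β:ℂ) • x := by
      rw [ContinuousLinearMap.sub_apply, e']
    rw [e, inner_sub_left, Complex.sub_re, inner_smul_left, Complex.conj_ofReal,
      Complex.re_ofReal_mul]
    have hxx : (⟪x, x⟫).re = ‖x‖^2 := by simpa using inner_self_eq_norm_sq (𝕜 := ℂ) x
    rw [hxx]
  have hsub_sa : ∀ β : ℝ, IsSelfAdjoint (H - algebraMap ℝ (E2 →L[ℂ] E2) β) := fun β =>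
    hsa.sub (by
      rw [IsScalarTower.algebraMap_apply ℝ ℂ (E2 →L[ℂ] E2) β, Complex.coe_algebraMap]
      exact IsSelfAdjoint.algebraMap _ (by simp [IsSelfAdjoint]))
  have halgmap : ∀ β : ℝ, algebraMap ℝ (E2 →L[ℂ] E2) β = algebraMap ℂ (E2 →L[ℂ] E2) (β:ℂ) := by
    intro β
    rw [IsScalarTower.algebraMap_apply ℝ ℂ (E2 →L[ℂ] E2) β, Complex.coe_algebraMap]
  have hmem_sub : ∀ (β r : ℝ), (r:ℂ) ∈ spectrum ℂ H →
      (r - β) ∈ spectrum ℝ (H - algebraMap ℝ (E2 →L[ℂ] E2) β) := by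
    intro β r hr
    rw [← spectrum.algebraMap_mem_iff ℂ, halgmap β, ← spectrum.sub_singleton_eq]
    refine ⟨(r:ℂ), hr, (β:ℂ), rfl, ?_⟩
    simp [Complex.coe_algebraMap]
  have hBelow : ∀ r ∈ S, a ≤ r := by
    intro r hr
    have hpos : (H - algebraMap ℝ (E2 →L[ℂ] E2) a).IsPositive := by
      refine ⟨(hsub_sa a).isSymmetric, fun x => ?_⟩
      rw [ContinuousLinearMap.reApplyInnerSelf_apply]
      have h2 := expand a x
      have h3 := hlow x
      rw [show (RCLike.re (⟪(H - algebraMap ℝ (E2 →L[ℂ] E2) a) x, x⟫) : ℝ)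
        = (⟪(H - algebraMap ℝ (E2 →L[ℂ] E2) a) x, x⟫).re from rfl, h2]
      linarith
    have h4 : (0:ℝ) ≤ r - a :=
      spectrum_nonneg_of_nonneg ((ContinuousLinearMap.nonneg_iff_isPositive _).mpr hpos)
        (hmem_sub a r hr)
    linarith
  have hSne : S.Nonempty := by
    obtain ⟨z, hz⟩ := spectrum.nonempty H
    have hz2 : z = (z.re : ℂ) := hsa.mem_spectrum_eq_re hz
    exact ⟨z.re, by rw [hS_def, Set.mem_setOf_eq, ← hz2]; exact hz⟩
  have hbdd : BddBelow S := ⟨a, hBelow⟩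
  refine ⟨le_csInf hSne hBelow, ?_⟩
  set s := sInf S with hs_def
  have hposS : (H - algebraMap ℝ (E2 →L[ℂ] E2) s).IsPositive := by
    rw [← ContinuousLinearMap.nonneg_iff_isPositive]
    refine (spec_nonneg_aux _ (hsub_sa s)).mpr ?_
    intro u hu
    have h1 : algebraMap ℝ ℂ u ∈ spectrum ℂ (H - algebraMap ℂ (E2 →L[ℂ] E2) (s:ℂ)) := by
      rw [← halgmap s]
      exact spectrum.algebraMap_mem ℂ hu
    rw [← spectrum.sub_singleton_eq] at h1
    obtain ⟨z, hz, y, hy, hzy⟩ := h1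
    rw [Set.mem_singleton_iff] at hy
    have hz2 : z = ((u + s : ℝ) : ℂ) := by
      have := eq_add_of_sub_eq hzy
      rw [hy] at this
      rw [this]
      simp [Complex.coe_algebraMap]
    have hus : (u + s) ∈ S := by
      rw [hS_def, Set.mem_setOf_eq]
      rw [← hz2]
      exact hz
    have := csInf_le hbdd hus
    linarith
  have hRay : ∀ x : E2, s * ‖x‖^2 ≤ (⟪H x, x⟫).re := by
    intro x
    have h0 := hposS.inner_nonneg_left x
    have h2 := expand s x
    rw [Complex.nonneg_iff, h2] at h0
    linarith [h0.1]
  by_contra hsb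
  push_neg at hsb
  obtain ⟨k, hk⟩ := exists_nat_gt ((2 * (Ψ 0 * Ψ (-1))) / ((s - b) * mn^2))
  set K : ℤ := ((k:ℤ)+1) * (N:ℤ) with hK_def
  have hN1 : (1:ℤ) ≤ (N:ℤ) := by exact_mod_cast hN
  have hK1 : 1 ≤ K := by
    have h1 : (1:ℤ) ≤ (k:ℤ)+1 := by omega
    nlinarith
  have hper0 : Ψ K = Ψ 0 := by
    simp only [hΨ_def]
    congr 1
    simp only [hK_def]
    push_cast
    simp [ZMod.natCast_self]
  have hper1 : Ψ (K-1) = Ψ (-1) := by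
    simp only [hΨ_def]
    congr 1
    simp only [hK_def]
    push_cast
    simp [ZMod.natCast_self]
  obtain ⟨x, hx1, hx2⟩ := upper_aux c H hH' Ψ hΨpos b hbΨ K hK1 hper0 hper1
  have hcard : (Finset.Ico (0:ℤ) K).card = (k+1) * N := by
    rw [Int.card_Ico, sub_zero, hK_def,
      show ((k:ℤ)+1)*(N:ℤ) = (((k+1)*N : ℕ) : ℤ) by push_cast; ring, Int.toNat_natCast]
  have hsum_ge : (((k+1)*N : ℕ) : ℝ) * mn^2 ≤ ‖x‖^2 := by
    rw [hx2, ← hcard]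
    have h := Finset.card_nsmul_le_sum (Finset.Ico (0:ℤ) K) (fun q => Ψ q ^2) (mn^2)
      (fun q _ => pow_le_pow_left₀ hmnpos.le (hΨmn q) 2)
    simpa [nsmul_eq_mul] using h
  have hxlow : ((k:ℝ)+1) * mn^2 ≤ ‖x‖^2 := by
    refine le_trans ?_ hsum_ge
    have h1 : ((k:ℝ)+1) ≤ (((k+1)*N : ℕ) : ℝ) := by
      push_cast
      have h2 : (1:ℝ) ≤ (N:ℝ) := by exact_mod_cast hN
      nlinarith [Nat.cast_nonneg (α := ℝ) k]
    nlinarith [sq_nonneg mn]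
  have hmain : s * ‖x‖^2 ≤ b * ‖x‖^2 + 2 * (Ψ 0 * Ψ (-1)) := le_trans (hRay x) hx1
  have hsbX : 0 < (s - b) * mn^2 := mul_pos (by linarith) (pow_pos hmnpos 2)
  rw [div_lt_iff₀ hsbX] at hk
  have h5 : (s - b) * ‖x‖^2 ≤ 2 * (Ψ 0 * Ψ (-1)) := by nlinarith
  have h6 : (s - b) * (((k:ℝ)+1) * mn^2) ≤ (s - b) * ‖x‖^2 :=
    mul_le_mul_of_nonneg_left hxlow (by linarith)
  nlinarith [Nat.cast_nonneg (α := ℝ) k]
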